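/- arXiv:2410.16142 — 2 statements merged into one kernel-verified Lean document; each statement's English description precedes it below -/
import Mathlib

section
/- Let D ⊆ B be an extension of integral domains with K the quotient field of D, and let E be a nonempty subset of K. The following are equivalent: (1) E ⊆ D; (2) Int^R_B(D,D) ⊆ Int^R_B(E,D); (3) D[X] ⊆ Int^R_B(E,D). -/
open Polynomial

variable {Ω : Type*} [Field Ω]

/-- Evaluation of a rational function at a point of `Ω`. -/
noncomputable def rfEval (e : Ω) (φ : RatFunc Ω) : Ω :=
  RatFunc.eval (RingHom.id Ω) e φ

/-- `φ` is defined at every point of `E` (its reduced denominator does not vanish)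
and maps `E` into `T`. -/
def MapsInto (E T : Set Ω) (φ : RatFunc Ω) : Prop :=
  ∀ e ∈ E, Polynomial.eval e φ.denom ≠ 0 ∧ rfEval e φ ∈ T

/-- Polynomials with all coefficients in the subring `B`. -/
def polyIn (B : Subring Ω) : Set (Polynomial Ω) := {p | ∀ i, p.coeff i ∈ B}

/-- `B(X)`: the rational functions expressible as a quotient of two polynomials
with coefficients in `B` (nonzero denominator). -/
def ratIn (B : Subring Ω) : Set (RatFunc Ω) :=
  {φ | ∃ f ∈ polyIn B, ∃ g ∈ polyIn B, g ≠ 0 ∧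
    φ = algebraMap (Polynomial Ω) (RatFunc Ω) f / algebraMap (Polynomial Ω) (RatFunc Ω) g}

/-- `Int^R_B(E,D)`: the `D`-valued `B`-rational functions on `E`. -/
def IntRB (B : Subring Ω) (E : Set Ω) (D : Subring Ω) : Set (RatFunc Ω) :=
  {φ | φ ∈ ratIn B ∧ MapsInto E (D : Set Ω) φ}

/-- The set of fractions of elements of `B`, i.e. the quotient field of `B`
inside the ambient field. -/
def fracIn (B : Subring Ω) : Set Ω := {x | ∃ a ∈ B, ∃ b ∈ B, b ≠ 0 ∧ x = a / b}


lemma evalMemSub {Ω : Type*} [Field Ω] {D : Subring Ω} {p : Polynomial Ω}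
    (hp : ∀ i, p.coeff i ∈ D) {e : Ω} (he : e ∈ D) : p.eval e ∈ D := by
  rw [Polynomial.eval_eq_sum_range]
  exact Subring.sum_mem _ fun i _ => Subring.mul_mem _ (hp i) (Subring.pow_mem _ he i)

lemma rfEval_algebraMap {Ω : Type*} [Field Ω] (e : Ω) (p : Polynomial Ω) :
    rfEval e (algebraMap (Polynomial Ω) (RatFunc Ω) p) = p.eval e := by
  simp [rfEval, Polynomial.eval, -Polynomial.eval₂_id]

lemma polyMemIntRB {Ω : Type*} [Field Ω] {D B : Subring Ω} {E : Set Ω}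
    (hDB : D ≤ B) (hED : E ⊆ (D : Set Ω)) {p : Polynomial Ω} (hp : p ∈ polyIn D) :
    algebraMap (Polynomial Ω) (RatFunc Ω) p ∈ IntRB B E D := by
  refine ⟨⟨p, fun i => hDB (hp i), 1, ?_, one_ne_zero, by simp⟩, ?_⟩
  · intro i
    rw [Polynomial.coeff_one]
    split <;> [exact B.one_mem; exact B.zero_mem]
  · intro e he
    rw [RatFunc.denom_algebraMap, rfEval_algebraMap]
    exact ⟨by simp, evalMemSub hp (hED he)⟩

lemma subset_of_X_mem {Ω : Type*} [Field Ω] {D B : Subring Ω} {E : Set Ω}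
    (hX : algebraMap (Polynomial Ω) (RatFunc Ω) (Polynomial.X) ∈ IntRB B E D) :
    E ⊆ (D : Set Ω) := by
  intro e he
  have := (hX.2 e he).2
  rwa [rfEval_algebraMap, Polynomial.eval_X] at this

/-- `E ⊆ D` iff `Int^R_B(D,D) ⊆ Int^R_B(E,D)` iff `D[X] ⊆ Int^R_B(E,D)`. -/
theorem subset_iff_intRB_subset_iff_polyD_subset {Ω : Type*} [Field Ω]
    (D B : Subring Ω) (K : Subfield Ω) (E : Set Ω)
    (hDB : D ≤ B) (hK : (K : Set Ω) = fracIn D) (hE : E ⊆ (K : Set Ω)) (hEne : E.Nonempty) :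
    (E ⊆ (D : Set Ω) ↔ IntRB B (D : Set Ω) D ⊆ IntRB B E D) ∧
    (E ⊆ (D : Set Ω) ↔
      ∀ p ∈ polyIn D, algebraMap (Polynomial Ω) (RatFunc Ω) p ∈ IntRB B E D) := by
  have hXD : (Polynomial.X : Polynomial Ω) ∈ polyIn D := by
    intro i
    rw [Polynomial.coeff_X]
    split <;> [exact D.one_mem; exact D.zero_mem]
  constructor
  · constructor
    · intro hED φ hφ
      exact ⟨hφ.1, fun e he => hφ.2 e (hED he)⟩
    · intro h
      exact subset_of_X_mem (h (polyMemIntRB hDB subset_rfl hXD))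
  · constructor
    · intro hED p hp
      exact polyMemIntRB hDB hED hp
    · intro h
      exact subset_of_X_mem (h _ hXD)
end

section
/- Let D ⊆ B be an extension of integral domains, K the quotient field of D, and E an infinite subset of K. Then Int^R_B(E,D) = Int^R(E,D), i.e., every rational function over B (in fact over any field extension of K) that maps E into D already lies in K(X). -/
open Polynomial

variable {Ω : Type*} [Field Ω]

lemma clear_denoms (D : Subring Ω) (p : Polynomial Ω) (hp : ∀ i, p.coeff i ∈ fracIn D) :
    ∃ c : Ω, c ∈ D ∧ c ≠ 0 ∧ ∀ i, c * p.coeff i ∈ D := by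
  choose a ha b hb hbne hx using hp
  refine ⟨∏ i ∈ p.support, b i, prod_mem fun i _ => hb i, Finset.prod_ne_zero_iff.2
    fun i _ => hbne i, fun i => ?_⟩
  by_cases hi : i ∈ p.support
  · rw [← Finset.mul_prod_erase _ _ hi, hx i, mul_comm (b i), mul_assoc,
      mul_div_cancel₀ _ (hbne i)]
    exact mul_mem (prod_mem fun j _ => hb j) (ha i)
  · rw [Polynomial.notMem_support_iff.1 hi, mul_zero]
    exact zero_mem D

lemma rfEval_eq (e : Ω) (φ : RatFunc Ω) :
    rfEval e φ = φ.num.eval e / φ.denom.eval e := rfl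

lemma coeff_finsum {n : ℕ} (a : Fin n → Ω) (k : ℕ) :
    (∑ j : Fin n, C (a j) * X ^ (j : ℕ)).coeff k =
      if h : k < n then a ⟨k, h⟩ else 0 := by
  rw [finset_sum_coeff]
  simp only [coeff_C_mul, coeff_X_pow]
  split
  · next h =>
    rw [Finset.sum_eq_single (⟨k, h⟩ : Fin n)] <;> simp +contextual [Fin.ext_iff, eq_comm]
  · next h =>
    apply Finset.sum_eq_zero
    intro j _
    have : k ≠ (j : ℕ) := fun hkj => h (hkj ▸ j.isLt)
    simp [this]

lemma eval_finsum {n : ℕ} (a : Fin n → Ω) (x : Ω) :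
    (∑ j : Fin n, C (a j) * X ^ (j : ℕ)).eval x = ∑ j : Fin n, a j * x ^ (j : ℕ) := by
  simp [eval_finset_sum]

lemma natDegree_finsum_le {n : ℕ} (a : Fin (n+1) → Ω) :
    (∑ j : Fin (n+1), C (a j) * X ^ (j : ℕ)).natDegree ≤ n := by
  refine (natDegree_sum_le _ _).trans ?_
  rw [Finset.fold_max_le]
  exact ⟨Nat.zero_le _, fun j _ => (natDegree_C_mul_X_pow_le _ _).trans (Nat.lt_succ_iff.1 j.isLt)⟩

theorem mapsInto_mem_ratIn (K : Subfield Ω) (E : Set Ω)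
    (hE : E ⊆ (K : Set Ω)) (hInf : E.Infinite) (φ : RatFunc Ω)
    (hden : ∀ e ∈ E, Polynomial.eval e φ.denom ≠ 0)
    (hval : ∀ e ∈ E, rfEval e φ ∈ K) :
    φ ∈ ratIn K.toSubring := by
  classical
  set p := φ.num with hp
  set q := φ.denom with hq
  set n := p.natDegree
  set m := q.natDegree
  set ι := Fin (n+1) ⊕ Fin (m+1)
  -- injective family of points of E
  obtain ⟨t, htE, htc⟩ := hInf.exists_subset_card_eq (n + 1 + (m + 1))
  let eqv : ι ≃ t := finSumFinEquiv.trans (t.equivFinOfCardEq htc).symm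
  set e : ι → Ω := fun i => (eqv i : Ω) with he
  have hinj : Function.Injective e :=
    Subtype.val_injective.comp eqv.injective
  have heE : ∀ i, e i ∈ E := fun i => htE (eqv i).2
  set c : ι → Ω := fun r => rfEval (e r) φ with hc
  have hpq : ∀ r, p.eval (e r) = c r * q.eval (e r) := by
    intro r
    show _ = rfEval (e r) φ * _
    rw [rfEval_eq, div_mul_cancel₀ _ (hden _ (heE r))]
  -- the matrix over K
  set eK : ι → K := fun r => ⟨e r, hE (heE r)⟩ with heK
  set cK : ι → K := fun r => ⟨c r, hval _ (heE r)⟩ with hcK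
  set M : Matrix ι ι K := Matrix.of fun r s =>
    Sum.elim (fun i : Fin (n+1) => eK r ^ (i : ℕ))
      (fun j : Fin (m+1) => -(cK r * eK r ^ (j : ℕ))) s with hM
  -- the Ω-solution
  set v : ι → Ω := Sum.elim (fun i : Fin (n+1) => p.coeff i)
    (fun j : Fin (m+1) => q.coeff j) with hv
  have hv0 : v ≠ 0 := by
    intro h0
    have : q.coeff m = 0 := congrFun h0 (Sum.inr ⟨m, Nat.lt_succ_self m⟩)
    exact (RatFunc.denom_ne_zero φ) (leadingCoeff_eq_zero.1 this)
  have hMv : (M.map K.subtype).mulVec v = 0 := by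
    funext r
    show ∑ s : ι, (M.map K.subtype) r s * v s = 0
    rw [Fintype.sum_sum_type]
    have h1 : ∀ i : Fin (n+1), (M.map K.subtype) r (Sum.inl i) * v (Sum.inl i)
        = p.coeff i * (e r) ^ (i : ℕ) := by
      intro i; simp [hM, hv, heK, SubmonoidClass.coe_pow, mul_comm]
    have h2 : ∀ j : Fin (m+1), (M.map K.subtype) r (Sum.inr j) * v (Sum.inr j)
        = -(c r * (q.coeff j * (e r) ^ (j : ℕ))) := by
      intro j; simp [hM, hv, heK, hcK]; ring
    simp only [h1, h2, Finset.sum_neg_distrib, ← Finset.mul_sum]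
    rw [Fin.sum_univ_eq_sum_range (fun i => p.coeff i * (e r) ^ i),
      Fin.sum_univ_eq_sum_range (fun j => q.coeff j * (e r) ^ j),
      ← eval_eq_sum_range, ← eval_eq_sum_range, hpq r]
    ring
  -- determinant vanishes over Ω, hence over K
  have hdet : M.det = 0 := by
    have h0 : (M.map K.subtype).det = 0 :=
      Matrix.exists_mulVec_eq_zero_iff.1 ⟨v, hv0, hMv⟩
    have h1 : K.subtype M.det = (M.map K.subtype).det := by
      rw [RingHom.map_det, RingHom.mapMatrix_apply]
    rw [← h1] at h0
    exact Subtype.ext h0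
  obtain ⟨w, hw0, hwM⟩ := Matrix.exists_mulVec_eq_zero_iff.2 hdet
  -- the polynomials over K
  set p' : Polynomial Ω := ∑ i : Fin (n+1), C ((w (Sum.inl i) : Ω)) * X ^ (i : ℕ) with hp'
  set q' : Polynomial Ω := ∑ j : Fin (m+1), C ((w (Sum.inr j) : Ω)) * X ^ (j : ℕ) with hq'
  have hrow : ∀ r, p'.eval (e r) = c r * q'.eval (e r) := by
    intro r
    have hr := congrFun hwM r
    rw [Matrix.mulVec, dotProduct, Fintype.sum_sum_type] at hr
    have hr' := congrArg (fun x : K => (x : Ω)) hr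
    simp only [hM, Matrix.of_apply, Sum.elim_inl, Sum.elim_inr, Pi.zero_apply] at hr'
    push_cast at hr'
    rw [hp', hq', eval_finsum, eval_finsum, ← sub_eq_zero, ← hr', Finset.mul_sum,
      sub_eq_add_neg, ← Finset.sum_neg_distrib]
    congr 1
    · exact Finset.sum_congr rfl fun i _ => mul_comm _ _
    · exact Finset.sum_congr rfl fun j _ => by ring
  -- the difference polynomial vanishes
  have hkey : p' * q = p * q' := by
    rw [← sub_eq_zero]
    apply eq_zero_of_natDegree_lt_card_of_eval_eq_zero _ hinj
    · intro r
      rw [eval_sub, eval_mul, eval_mul, hrow r, hpq r, sub_eq_zero]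
      ring
    · calc (p' * q - p * q').natDegree
          ≤ max (p' * q).natDegree (p * q').natDegree := natDegree_sub_le _ _
        _ ≤ max (p'.natDegree + m) (n + q'.natDegree) :=
            max_le_max (natDegree_mul_le) (natDegree_mul_le)
        _ ≤ n + m := by
            apply max_le
            · exact Nat.add_le_add_right (natDegree_finsum_le _) m
            · exact Nat.add_le_add_left (natDegree_finsum_le _) n
        _ < Fintype.card ι := by
            simp only [ι, Fintype.card_sum, Fintype.card_fin]
            omega
  have hq'0 : q' ≠ 0 := by
    intro h0
    apply hw0
    have hp'0 : p' = 0 := by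
      have := hkey
      rw [h0, mul_zero] at this
      exact (mul_eq_zero.1 this).resolve_right (RatFunc.denom_ne_zero φ)
    funext s
    match s with
    | Sum.inl i =>
      have := coeff_finsum (fun i : Fin (n+1) => (w (Sum.inl i) : Ω)) i
      rw [← hp', hp'0, coeff_zero] at this
      simp only [i.isLt, dif_pos, Fin.eta] at this
      exact Subtype.ext this.symm
    | Sum.inr j =>
      have := coeff_finsum (fun j : Fin (m+1) => (w (Sum.inr j) : Ω)) j
      rw [← hq', h0, coeff_zero] at this
      simp only [j.isLt, dif_pos, Fin.eta] at this
      exact Subtype.ext this.symm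
  -- conclude
  refine ⟨p', ?_, q', ?_, hq'0, ?_⟩
  · intro k
    rw [hp', coeff_finsum]
    split
    · exact (w _).2
    · exact zero_mem _
  · intro k
    rw [hq', coeff_finsum]
    split
    · exact (w _).2
    · exact zero_mem _
  · rw [← RatFunc.num_div_denom φ, div_eq_div_iff (RatFunc.algebraMap_ne_zero
      (RatFunc.denom_ne_zero φ)) (RatFunc.algebraMap_ne_zero hq'0)]
    rw [← map_mul, ← map_mul]
    exact congrArg _ hkey.symm

/-- if `E` is an infinite subset of the quotient field `K` of `D`, then
`Int^R_B(E,D) = Int^R(E,D)`, i.e. every `B`-rational function mapping `E` into `D`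
already lies in `K(X)`. -/
theorem intRB_eq_intR_of_infinite {Ω : Type*} [Field Ω] (D B : Subring Ω) (K : Subfield Ω)
    (E : Set Ω) (hDB : D ≤ B) (hK : (K : Set Ω) = fracIn D) (hE : E ⊆ (K : Set Ω))
    (hInf : E.Infinite) :
    IntRB B E D = IntRB K.toSubring E D := by
  ext φ
  constructor
  · rintro ⟨-, hmap⟩
    refine ⟨?_, hmap⟩
    apply mapsInto_mem_ratIn K E hE hInf φ (fun e he => (hmap e he).1)
    intro e he
    have : rfEval e φ ∈ fracIn D :=
      ⟨_, (hmap e he).2, 1, one_mem _, one_ne_zero, (div_one _).symm⟩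
    rw [← hK] at this
    exact this
  · rintro ⟨⟨f, hf, g, hg, hg0, hφ⟩, hmap⟩
    refine ⟨?_, hmap⟩
    have hfK : ∀ i, f.coeff i ∈ fracIn D := fun i => hK ▸ (hf i)
    have hgK : ∀ i, g.coeff i ∈ fracIn D := fun i => hK ▸ (hg i)
    obtain ⟨cf, hcfD, hcf0, hcfm⟩ := clear_denoms D f hfK
    obtain ⟨cg, hcgD, hcg0, hcgm⟩ := clear_denoms D g hgK
    have hC0 : (C (cf * cg) : Polynomial Ω) ≠ 0 := by
      simpa using mul_ne_zero hcf0 hcg0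
    refine ⟨C (cf * cg) * f, ?_, C (cf * cg) * g, ?_, mul_ne_zero hC0 hg0, ?_⟩
    · intro i
      rw [coeff_C_mul, mul_comm cf cg, mul_assoc]
      exact hDB (mul_mem hcgD (hcfm i))
    · intro i
      rw [coeff_C_mul, mul_assoc]
      exact hDB (mul_mem hcfD (hcgm i))
    · rw [map_mul _ (C (cf * cg)) f, map_mul _ (C (cf * cg)) g,
        mul_div_mul_left _ _ (RatFunc.algebraMap_ne_zero hC0)]
      exact hφ
end
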